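/- Let G be a connected graph with |E(G)| = k(|V(G)|−1). If k+1 is composite and |V(G)| > 2, then the permanent of any kDSI matrix of G is congruent to 0 modulo k+1. -/

import Mathlib

/-- The permanent of a square matrix. -/
def perm {n R : Type*} [DecidableEq n] [Fintype n] [CommRing R] (A : Matrix n n R) : R :=
  ∑ σ : Equiv.Perm n, ∏ i, A i (σ i)

/-- Entry of the signed incidence matrix of an oriented multigraph with edge-tail map `s`
and edge-head map `t`: +1 if the edge leaves the vertex, −1 if it enters, 0 otherwise. -/
def inc {V E : Type*} [DecidableEq V] (s t : E → V) (v : V) (e : E) : ℤ :=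
  (if s e = v then 1 else 0) - (if t e = v then 1 else 0)

lemma card_dvd_sum_of_invariant {G P : Type*} [Group G] [Fintype G] [Group P] [Fintype P]
    (g : P →* G) (hg : Function.Injective g) (f : G → ℤ)
    (hf : ∀ σ p, f (σ * g p) = f σ) :
    (Fintype.card P : ℤ) ∣ ∑ σ : G, f σ := by
  classical
  set H := g.range with hH
  have hbij : Function.Bijective (fun x : (G ⧸ H) × P => x.1.out * g x.2) := by
    constructor
    · rintro ⟨q, p⟩ ⟨q', p'⟩ h
      simp only at h
      have hq : q = q' := by
        have h1 : (QuotientGroup.mk (q.out * g p) : G ⧸ H) = q := by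
          rw [QuotientGroup.mk_mul_of_mem _ (MonoidHom.mem_range.mpr ⟨p, rfl⟩), QuotientGroup.out_eq']
        have h2 : (QuotientGroup.mk (q'.out * g p') : G ⧸ H) = q' := by
          rw [QuotientGroup.mk_mul_of_mem _ (MonoidHom.mem_range.mpr ⟨p', rfl⟩), QuotientGroup.out_eq']
        rw [← h1, ← h2, h]
      subst hq
      have : g p = g p' := by
        have := mul_left_cancel (a := q.out) (by simpa using h)
        exact this
      exact Prod.ext rfl (hg this)
    · intro σ
      have : (QuotientGroup.mk σ : G ⧸ H).out⁻¹ * σ ∈ H := by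
        rw [← QuotientGroup.eq, QuotientGroup.out_eq']
      obtain ⟨p, hp⟩ := this
      exact ⟨⟨QuotientGroup.mk σ, p⟩, by simp [hp]⟩
  have := Fintype.sum_bijective _ hbij (fun x => f (x.1.out * g x.2)) f (fun x => rfl)
  rw [← this]
  have : ∀ x : (G ⧸ H) × P, f (x.1.out * g x.2) = f x.1.out := fun x => hf _ _
  rw [Fintype.sum_congr _ _ this, Fintype.sum_prod_type]
  simp only [Finset.sum_const, Finset.card_univ, nsmul_eq_mul]
  exact Finset.dvd_sum fun x _ => dvd_mul_right _ _

/-- For a connected loopless multigraph G with |E| = k(|V|−1), k+1 composite and |V| > 2,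
the permanent of any kDSI matrix of G is 0 modulo k+1. -/
theorem stmt9 {V E : Type*} [Fintype V] [Fintype E] [DecidableEq V] [DecidableEq E]
    (s t : E → V) (hloop : ∀ e, s e ≠ t e)
    (hconn : (SimpleGraph.fromRel (fun u v => ∃ e, s e = u ∧ t e = v)).Connected)
    (k : ℕ) (hk : 0 < k) (hcomp : ¬ Nat.Prime (k + 1)) (hV : 2 < Fintype.card V)
    (hcard : Fintype.card E = k * (Fintype.card V - 1))
    (w : V) (ρ : (Fin k × {v : V // v ≠ w}) ≃ E) :
    perm (Matrix.of fun i j : Fin k × {v : V // v ≠ w} => inc s t i.2.1 (ρ j))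
      ≡ 0 [ZMOD ((k : ℤ) + 1)] := by
  classical
  set M : Matrix (Fin k × {v : V // v ≠ w}) (Fin k × {v : V // v ≠ w}) ℤ :=
    Matrix.of fun i j : Fin k × {v : V // v ≠ w} => inc s t i.2.1 (ρ j) with hM
  rw [Int.modEq_zero_iff_dvd]
  -- the group of permutations of the first coordinate, fiberwise over the vertex set
  let g : ({v : V // v ≠ w} → Equiv.Perm (Fin k)) →* Equiv.Perm (Fin k × {v : V // v ≠ w}) :=
    MonoidHom.mk' (fun π => Equiv.prodCongrLeft π) (by
      intro π π'
      ext x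
      · simp [Equiv.prodCongrLeft]
      · simp [Equiv.prodCongrLeft])
  have hg : Function.Injective g := by
    intro π π' h
    funext v
    apply Equiv.ext
    intro i
    have := congrArg (fun (e : Equiv.Perm (Fin k × {v : V // v ≠ w})) => (e (i, v)).1) h
    simpa [g, Equiv.prodCongrLeft] using this
  have hinv : ∀ (σ : Equiv.Perm (Fin k × {v : V // v ≠ w}))
      (π : {v : V // v ≠ w} → Equiv.Perm (Fin k)),
      (∏ i, M i ((σ * g π) i)) = ∏ i, M i (σ i) := by
    intro σ π
    exact Fintype.prod_bijective (g π) (g π).bijective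
      (fun x => M x ((σ * g π) x)) (fun y => M y (σ y))
      (by rintro ⟨i, v⟩; simp [g, Equiv.prodCongrLeft, hM, Matrix.of_apply])
  have hdvd : (Fintype.card ({v : V // v ≠ w} → Equiv.Perm (Fin k)) : ℤ) ∣ perm M :=
    card_dvd_sum_of_invariant g hg (fun σ => ∏ i, M i (σ i)) hinv
  have hcardS : Fintype.card {v : V // v ≠ w} = Fintype.card V - 1 := by
    have h1 : Fintype.card {v : V // ¬ v = w} = Fintype.card V - Fintype.card {v : V // v = w} :=
      Fintype.card_subtype_compl _
    rw [Fintype.card_subtype_eq] at h1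
    exact h1
  have hcardP : Fintype.card ({v : V // v ≠ w} → Equiv.Perm (Fin k))
      = (Nat.factorial k) ^ (Fintype.card V - 1) := by
    rw [Fintype.card_fun, Fintype.card_perm, Fintype.card_fin, hcardS]
  -- k+1 divides k!^2
  have hk3 : 3 ≤ k := by
    by_contra h
    push_neg at h
    interval_cases k <;> simp_all [Nat.prime_two, Nat.prime_three]
  obtain ⟨a, ha, ha2, halt⟩ := Nat.exists_dvd_of_not_prime2 (by omega) hcomp
  obtain ⟨b, hb⟩ := ha
  have hb2 : 2 ≤ b := by nlinarith
  have hblt : b < k + 1 := by nlinarith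
  have hdvd1 : (k + 1) ∣ (Nat.factorial k) ^ 2 := by
    rw [hb, sq]
    exact mul_dvd_mul (Nat.dvd_factorial (by omega) (by omega))
      (Nat.dvd_factorial (by omega) (by omega))
  have hdvd2 : (k + 1) ∣ (Nat.factorial k) ^ (Fintype.card V - 1) :=
    hdvd1.trans (pow_dvd_pow _ (by omega))
  have hfin : ((k : ℤ) + 1) ∣ (Fintype.card ({v : V // v ≠ w} → Equiv.Perm (Fin k)) : ℤ) := by
    rw [hcardP]
    exact_mod_cast Int.natCast_dvd_natCast.mpr hdvd2
  exact hfin.trans hdvd
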